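/- For every integer k ≥ 1 and every real x > 0, the function φ_k(x) = (1 + x + x^2 + … + x^k)^{−1} satisfies φ_k''(x) = (k+1) · x^{k−1} · ( Σ_{i=1}^{k} i·(k+1−i)·x^{i−1} ) · φ_k(x)^3, where the middle factor equals k·x^{k−1} + 2(k−1)·x^{k−2} + … + (k−1)·2·x + k. -/

import Mathlib

/-- `φ_k(x) = (1 + x + x² + … + x^k)⁻¹`. -/
noncomputable def phi (k : ℕ) (x : ℝ) : ℝ := (∑ j ∈ Finset.range (k + 1), x ^ j)⁻¹

noncomputable def Sgs (k : ℕ) (x : ℝ) : ℝ := ∑ j ∈ Finset.range (k + 1), x ^ j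
noncomputable def Pgs (k : ℕ) (x : ℝ) : ℝ := ∑ j ∈ Finset.range (k + 1), (j : ℝ) * x ^ (j - 1)
noncomputable def Qgs (k : ℕ) (x : ℝ) : ℝ :=
  ∑ j ∈ Finset.range (k + 1), (j : ℝ) * ((j - 1 : ℕ) : ℝ) * x ^ (j - 2)

lemma hasDerivAt_Sgs (k : ℕ) (x : ℝ) : HasDerivAt (Sgs k) (Pgs k x) x := by
  have := HasDerivAt.fun_sum (u := Finset.range (k + 1))
    (A := fun j (y : ℝ) => y ^ j) (A' := fun j => (j : ℝ) * x ^ (j - 1))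
    (fun j _ => hasDerivAt_pow j x)
  exact this

lemma hasDerivAt_Pgs (k : ℕ) (x : ℝ) : HasDerivAt (Pgs k) (Qgs k x) x := by
  refine HasDerivAt.fun_sum fun j _ => ?_
  have := (hasDerivAt_pow (j - 1) x).const_mul (j : ℝ)
  simpa [Nat.sub_sub, mul_assoc] using this

lemma Sgs_pos (k : ℕ) {x : ℝ} (hx : 0 < x) : 0 < Sgs k x := by
  unfold Sgs
  have : (0 : ℕ) ∈ Finset.range (k + 1) := by simp
  exact Finset.sum_pos (fun j _ => pow_pos hx j) ⟨0, this⟩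

lemma D1 (k : ℕ) (x : ℝ) : Sgs k x + (x - 1) * Pgs k x = ((k : ℝ) + 1) * x ^ k := by
  have hfun : (fun y : ℝ => Sgs k y * (y - 1)) = fun y : ℝ => y ^ (k + 1) - 1 := by
    funext y
    exact geom_sum_mul y (k + 1)
  have h1 : HasDerivAt (fun y : ℝ => Sgs k y * (y - 1))
      (Pgs k x * (x - 1) + Sgs k x * 1) x :=
    (hasDerivAt_Sgs k x).mul ((hasDerivAt_id x).sub_const 1)
  have h2 : HasDerivAt (fun y : ℝ => y ^ (k + 1) - 1)
      (((k : ℝ) + 1) * x ^ k) x := by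
    have := (hasDerivAt_pow (k + 1) x).sub_const 1
    simpa using this
  rw [hfun] at h1
  have := h1.unique h2
  linarith [this]

lemma D2 (k : ℕ) (x : ℝ) :
    Qgs k x * (x - 1) + 2 * Pgs k x = ((k : ℝ) + 1) * (k : ℝ) * x ^ (k - 1) := by
  have hfun : (fun y : ℝ => Pgs k y * (y - 1) + Sgs k y)
      = fun y : ℝ => ((k : ℝ) + 1) * y ^ k := by
    funext y
    have := D1 k y
    linarith
  have h1 : HasDerivAt (fun y : ℝ => Pgs k y * (y - 1) + Sgs k y)
      (Qgs k x * (x - 1) + Pgs k x * 1 + Pgs k x) x :=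
    ((hasDerivAt_Pgs k x).mul ((hasDerivAt_id x).sub_const 1)).add (hasDerivAt_Sgs k x)
  have h2 : HasDerivAt (fun y : ℝ => ((k : ℝ) + 1) * y ^ k)
      (((k : ℝ) + 1) * ((k : ℝ) * x ^ (k - 1))) x :=
    (hasDerivAt_pow k x).const_mul _
  rw [hfun] at h1
  have := h1.unique h2
  linarith [this]

lemma key_ident (k : ℕ) (hk : 1 ≤ k) (x : ℝ) :
    2 * Pgs k x ^ 2 - Qgs k x * Sgs k x =
      ((k : ℝ) + 1) * x ^ (k - 1) * ((k : ℝ) * Pgs k x - x * Qgs k x) := by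
  have ex : x ^ k = x ^ (k - 1) * x := by
    conv_lhs => rw [show k = (k - 1) + 1 by omega]
    rw [pow_succ]
  have e1 := D1 k x
  rw [ex] at e1
  have e2 := D2 k x
  linear_combination Pgs k x * e2 - Qgs k x * e1

lemma M_ident (k : ℕ) (x : ℝ) :
    (∑ i ∈ Finset.Icc 1 k, (i : ℝ) * ((k + 1 - i : ℕ) : ℝ) * x ^ (i - 1)) =
      (k : ℝ) * Pgs k x - x * Qgs k x := by
  have hsub : Finset.Icc 1 k ⊆ Finset.range (k + 1) := by
    intro j hj
    simp only [Finset.mem_Icc] at hj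
    simp only [Finset.mem_range]
    omega
  rw [Finset.sum_subset hsub (by
    intro j hj hj'
    simp only [Finset.mem_range] at hj
    simp only [Finset.mem_Icc] at hj'
    have : j = 0 := by omega
    subst this
    simp)]
  unfold Pgs Qgs
  rw [Finset.mul_sum, Finset.mul_sum, ← Finset.sum_sub_distrib]
  refine Finset.sum_congr rfl fun j hj => ?_
  simp only [Finset.mem_range] at hj
  match j with
  | 0 => simp
  | 1 => simp
  | (m + 2) =>
    have h1 : ((k + 1 - (m + 2) : ℕ) : ℝ) = (k : ℝ) + 1 - ((m : ℝ) + 2) := by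
      have : m + 2 ≤ k + 1 := by omega
      rw [Nat.cast_sub this]
      push_cast
      ring
    rw [h1]
    show ((m + 2 : ℕ) : ℝ) * ((k : ℝ) + 1 - ((m : ℝ) + 2)) * x ^ (m + 1) =
      (k : ℝ) * (((m + 2 : ℕ) : ℝ) * x ^ (m + 1)) -
        x * (((m + 2 : ℕ) : ℝ) * (((m + 1 : ℕ)) : ℝ) * x ^ m)
    push_cast
    ring

theorem stmt_3 (k : ℕ) (hk : 1 ≤ k) (x : ℝ) (hx : 0 < x) :
    deriv (deriv (phi k)) x =
      ((k : ℝ) + 1) * x ^ (k - 1) *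
        (∑ i ∈ Finset.Icc 1 k, (i : ℝ) * ((k + 1 - i : ℕ) : ℝ) * x ^ (i - 1)) *
        (phi k x) ^ 3 := by
  have hphi : phi k = fun y => (Sgs k y)⁻¹ := rfl
  have hSx : Sgs k x ≠ 0 := ne_of_gt (Sgs_pos k hx)
  -- deriv phi = -P/S^2 near x
  have hEq : deriv (phi k) =ᶠ[nhds x] fun y => -Pgs k y / (Sgs k y) ^ 2 := by
    filter_upwards [isOpen_Ioi.mem_nhds (show x ∈ Set.Ioi (0:ℝ) from hx)] with y hy
    have hSy : Sgs k y ≠ 0 := ne_of_gt (Sgs_pos k hy)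
    have := ((hasDerivAt_Sgs k y).inv hSy).deriv
    rw [hphi]
    exact this
  rw [hEq.deriv_eq]
  -- derivative of -P/S^2 at x
  have hden : HasDerivAt (fun y => (Sgs k y) ^ 2) (2 * Sgs k x ^ 1 * Pgs k x) x := by
    simpa using (hasDerivAt_Sgs k x).fun_pow 2
  have hden' : (Sgs k x) ^ 2 ≠ 0 := pow_ne_zero 2 hSx
  have hD : HasDerivAt (fun y => -Pgs k y / (Sgs k y) ^ 2)
      ((-Qgs k x * Sgs k x ^ 2 - (-Pgs k x) * (2 * Sgs k x ^ 1 * Pgs k x)) / ((Sgs k x) ^ 2) ^ 2)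
      x := (hasDerivAt_Pgs k x).neg.div hden hden'
  rw [hD.deriv]
  rw [M_ident, hphi]
  rw [show (((k : ℝ) + 1) * x ^ (k - 1) * ((k : ℝ) * Pgs k x - x * Qgs k x))
      = 2 * Pgs k x ^ 2 - Qgs k x * Sgs k x from (key_ident k hk x).symm]
  field_simp
  ring
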